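/- Let ∥ be a Clifford-like parallelism. For every h ∈ H with h ≠ 0, the inner automorphism x ↦ h⁻¹·x·h preserves ∥. -/
import Mathlib


variable (F H : Type*) [Field F] [DivisionRing H] [Algebra F H]

/-- A *line* of the projective space `ℙ(H_F)`: a 2-dimensional `F`-subspace of `H`. -/
abbrev Line := {M : Submodule F H // Module.finrank F M = 2}

/-- `M ∥ℓ N` : there is `g ≠ 0` with `N = g·M`. -/
def LeftPar (M N : Submodule F H) : Prop :=
  ∃ g : H, g ≠ 0 ∧ (N : Set H) = (fun m => g * m) '' (M : Set H)

/-- `M ∥r N` : there is `g ≠ 0` with `N = M·g`. -/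
def RightPar (M N : Submodule F H) : Prop :=
  ∃ g : H, g ≠ 0 ∧ (N : Set H) = (fun m => m * g) '' (M : Set H)

/-- The left parallel class `Sℓ(M) = {N | N ∥ℓ M}`. -/
def leftClass (M : Line F H) : Set (Line F H) := {N | LeftPar F H N.1 M.1}

/-- The right parallel class `Sr(M) = {N | N ∥r M}`. -/
def rightClass (M : Line F H) : Set (Line F H) := {N | RightPar F H N.1 M.1}

/-- The `∥`-class `S(M) = {N | N ∥ M}`. -/
def parClass (par : Line F H → Line F H → Prop) (M : Line F H) : Set (Line F H) :=
  {N | par N M}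

/-- A parallelism: an equivalence relation on lines such that for every `x ≠ 0`
and every line `M` there is exactly one line `N` with `x ∈ N` and `N ∥ M`. -/
def IsParallelism (par : Line F H → Line F H → Prop) : Prop :=
  Equivalence par ∧
    ∀ x : H, x ≠ 0 → ∀ M : Line F H, ∃! N : Line F H, x ∈ N.1 ∧ par N M

/-- A Clifford-like parallelism: every `∥`-class is a left or a right parallel class. -/
def IsCliffordLike (par : Line F H → Line F H → Prop) : Prop :=
  IsParallelism F H par ∧
    ∀ M : Line F H,
      parClass F H par M = leftClass F H M ∨ parClass F H par M = rightClass F H M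

/-- The star `𝒜` of lines through `F·1`, i.e. the lines containing `1`. -/
def starLines : Set (Line F H) := {L | (1 : H) ∈ L.1}

/-- The set `ℱ` of lines of `𝒜` whose `∥`-class is a left parallel class. -/
def calF (par : Line F H → Line F H → Prop) : Set (Line F H) :=
  {L | (1 : H) ∈ L.1 ∧ parClass F H par L = leftClass F H L}

/-- A semilinear bijection of `H` (over some field automorphism of `F`). -/
def IsSemilinear (β : H → H) : Prop :=
  Function.Bijective β ∧ (∀ x y : H, β (x + y) = β x + β y) ∧
    ∃ σ : F ≃+* F, ∀ (a : F) (x : H), β (a • x) = σ a • β x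

/-- `β` preserves the parallelism `par`: for all lines `M, N`,
`M ∥ N ↔ β(M) ∥ β(N)`, where `β(M)` denotes the line whose carrier is `β '' M`. -/
def Preserves (β : H → H) (par : Line F H → Line F H → Prop) : Prop :=
  ∀ M N M' N' : Line F H,
    (M'.1 : Set H) = β '' (M.1 : Set H) →
    (N'.1 : Set H) = β '' (N.1 : Set H) →
    (par M N ↔ par M' N')

/-- The image `β(𝒢)` of a set of lines under `β`. -/
def imageLines (β : H → H) (G : Set (Line F H)) : Set (Line F H) :=
  {L' | ∃ L ∈ G, (L'.1 : Set H) = β '' (L.1 : Set H)}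

/-- The centre of `H` is exactly `F·1`. -/
def CenterEqF : Prop :=
  ∀ z : H, (∀ x : H, z * x = x * z) ↔ ∃ a : F, z = algebraMap F H a

/-- Ring automorphism of `H`, as a plain function. -/
def IsRingAutFn (α : H → H) : Prop :=
  Function.Bijective α ∧ (∀ x y : H, α (x + y) = α x + α y) ∧ α 1 = 1 ∧
    ∀ x y : H, α (x * y) = α x * α y

/-- Ring antiautomorphism of `H`, as a plain function. -/
def IsRingAntiAutFn (α : H → H) : Prop :=
  Function.Bijective α ∧ (∀ x y : H, α (x + y) = α x + α y) ∧ α 1 = 1 ∧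
    ∀ x y : H, α (x * y) = α y * α x

/-! ### Auxiliary lemmas -/

theorem leftPar_symm {M N : Submodule F H} (hp : LeftPar F H M N) : LeftPar F H N M := by
  obtain ⟨g, hg, hs⟩ := hp
  refine ⟨g⁻¹, inv_ne_zero hg, ?_⟩
  rw [hs, Set.image_image]
  simp [inv_mul_cancel_left₀ hg]

theorem leftPar_trans {A B C : Submodule F H} (h1 : LeftPar F H A B) (h2 : LeftPar F H B C) :
    LeftPar F H A C := by
  obtain ⟨g, hg, hB⟩ := h1
  obtain ⟨g', hg', hC⟩ := h2
  refine ⟨g' * g, mul_ne_zero hg' hg, ?_⟩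
  rw [hC, hB, Set.image_image]
  simp [mul_assoc]

theorem rightPar_symm {M N : Submodule F H} (hp : RightPar F H M N) : RightPar F H N M := by
  obtain ⟨g, hg, hs⟩ := hp
  refine ⟨g⁻¹, inv_ne_zero hg, ?_⟩
  rw [hs, Set.image_image]
  simp [mul_inv_cancel_right₀ hg]

theorem rightPar_trans {A B C : Submodule F H} (h1 : RightPar F H A B) (h2 : RightPar F H B C) :
    RightPar F H A C := by
  obtain ⟨g, hg, hB⟩ := h1
  obtain ⟨g', hg', hC⟩ := h2
  refine ⟨g * g', mul_ne_zero hg hg', ?_⟩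
  rw [hC, hB, Set.image_image]
  simp [mul_assoc]

theorem parClass_eq_of_par {par : Line F H → Line F H → Prop} (heq : Equivalence par)
    {A B : Line F H} (hAB : par A B) : parClass F H par A = parClass F H par B := by
  ext X
  exact ⟨fun hx => heq.trans hx hAB, fun hx => heq.trans hx (heq.symm hAB)⟩

/-- Left multiplication by `g ≠ 0` preserves any Clifford-like parallelism (one direction). -/
theorem leftMul_preserves (par : Line F H → Line F H → Prop) (hpar : IsCliffordLike F H par)
    (g : H) (hg : g ≠ 0) (M N M' N' : Line F H)
    (hM' : (M'.1 : Set H) = (fun m => g * m) '' (M.1 : Set H))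
    (hN' : (N'.1 : Set H) = (fun m => g * m) '' (N.1 : Set H))
    (hMN : par M N) : par M' N' := by
  obtain ⟨⟨heq, -⟩, hcl⟩ := hpar
  have hMM' : LeftPar F H M.1 M'.1 := ⟨g, hg, hM'⟩
  have hNN' : LeftPar F H N.1 N'.1 := ⟨g, hg, hN'⟩
  rcases hcl N with hA | hB
  · -- the class of `N` is a left class
    have hMlN : LeftPar F H M.1 N.1 := by
      have hmem : M ∈ parClass F H par N := hMN
      rwa [hA] at hmem
    have hM'N : M' ∈ leftClass F H N := leftPar_trans F H (leftPar_symm F H hMM') hMlN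
    rw [← hA] at hM'N
    have hN'N : N' ∈ leftClass F H N := leftPar_symm F H hNN'
    rw [← hA] at hN'N
    exact heq.trans hM'N (heq.symm hN'N)
  · -- the class of `N` is a right class
    have hMrN : M ∈ rightClass F H N := by
      have hmem : M ∈ parClass F H par N := hMN
      rwa [hB] at hmem
    obtain ⟨k, hk, hNk⟩ := hMrN
    rcases hcl N' with hA' | hB'
    · -- the class of `N'` is a left class
      have hNlN' : N ∈ leftClass F H N' := hNN'
      have hparNN' : par N N' := by rwa [← hA'] at hNlN'
      have hEq : rightClass F H N = leftClass F H N' := by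
        rw [← hB, ← hA']
        exact parClass_eq_of_par F H heq hparNN'
      have hMlN' : LeftPar F H M.1 N'.1 := by
        have hmem : M ∈ rightClass F H N := ⟨k, hk, hNk⟩
        rw [hEq] at hmem
        exact hmem
      have hfin : M' ∈ leftClass F H N' :=
        leftPar_trans F H (leftPar_symm F H hMM') hMlN'
      rwa [← hA'] at hfin
    · -- the class of `N'` is a right class
      have hfin : M' ∈ rightClass F H N' := by
        refine ⟨k, hk, ?_⟩
        rw [hN', hNk, hM', Set.image_image, Set.image_image]
        simp [mul_assoc]
      rwa [← hB'] at hfin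

/-- Right multiplication by `g ≠ 0` preserves any Clifford-like parallelism (one direction). -/
theorem rightMul_preserves (par : Line F H → Line F H → Prop) (hpar : IsCliffordLike F H par)
    (g : H) (hg : g ≠ 0) (M N M' N' : Line F H)
    (hM' : (M'.1 : Set H) = (fun m => m * g) '' (M.1 : Set H))
    (hN' : (N'.1 : Set H) = (fun m => m * g) '' (N.1 : Set H))
    (hMN : par M N) : par M' N' := by
  obtain ⟨⟨heq, -⟩, hcl⟩ := hpar
  have hMM' : RightPar F H M.1 M'.1 := ⟨g, hg, hM'⟩
  have hNN' : RightPar F H N.1 N'.1 := ⟨g, hg, hN'⟩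
  rcases hcl N with hA | hB
  · -- the class of `N` is a left class
    have hMlN : M ∈ leftClass F H N := by
      have hmem : M ∈ parClass F H par N := hMN
      rwa [hA] at hmem
    obtain ⟨k, hk, hNk⟩ := hMlN
    rcases hcl N' with hA' | hB'
    · -- the class of `N'` is a left class
      have hfin : M' ∈ leftClass F H N' := by
        refine ⟨k, hk, ?_⟩
        rw [hN', hNk, hM', Set.image_image, Set.image_image]
        simp [mul_assoc]
      rwa [← hA'] at hfin
    · -- the class of `N'` is a right class
      have hNrN' : N ∈ rightClass F H N' := hNN'
      have hparNN' : par N N' := by rwa [← hB'] at hNrN'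
      have hEq : leftClass F H N = rightClass F H N' := by
        rw [← hA, ← hB']
        exact parClass_eq_of_par F H heq hparNN'
      have hMrN' : RightPar F H M.1 N'.1 := by
        have hmem : M ∈ leftClass F H N := ⟨k, hk, hNk⟩
        rw [hEq] at hmem
        exact hmem
      have hfin : M' ∈ rightClass F H N' :=
        rightPar_trans F H (rightPar_symm F H hMM') hMrN'
      rwa [← hB'] at hfin
  · -- the class of `N` is a right class
    have hMrN : RightPar F H M.1 N.1 := by
      have hmem : M ∈ parClass F H par N := hMN
      rwa [hB] at hmem
    have hM'N : M' ∈ rightClass F H N := rightPar_trans F H (rightPar_symm F H hMM') hMrN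
    rw [← hB] at hM'N
    have hN'N : N' ∈ rightClass F H N := rightPar_symm F H hNN'
    rw [← hB] at hN'N
    exact heq.trans hM'N (heq.symm hN'N)

/-- The image of a line under right multiplication by `h ≠ 0` is again a line. -/
theorem exists_line_rmul (h : H) (hh : h ≠ 0) (M : Line F H) :
    ∃ Mh : Line F H, (Mh.1 : Set H) = (fun m => m * h) '' (M.1 : Set H) := by
  have hinj : Function.Injective ⇑(LinearMap.mulRight F h) := by
    intro a b hab
    simp only [LinearMap.mulRight_apply] at hab
    exact mul_left_injective₀ hh hab
  refine ⟨⟨M.1.map (LinearMap.mulRight F h), ?_⟩, ?_⟩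
  · rw [← (Submodule.equivMapOfInjective (LinearMap.mulRight F h) hinj M.1).finrank_eq]
    exact M.2
  · ext x
    simp [Submodule.mem_map]

/-- One direction of the main theorem, for any `h ≠ 0`. -/
theorem innerAut_forward (par : Line F H → Line F H → Prop) (hpar : IsCliffordLike F H par)
    (h : H) (hh : h ≠ 0) (M N M' N' : Line F H)
    (hM' : (M'.1 : Set H) = (fun x => h⁻¹ * x * h) '' (M.1 : Set H))
    (hN' : (N'.1 : Set H) = (fun x => h⁻¹ * x * h) '' (N.1 : Set H))
    (hMN : par M N) : par M' N' := by
  obtain ⟨Mh, hMh⟩ := exists_line_rmul F H h hh M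
  obtain ⟨Nh, hNh⟩ := exists_line_rmul F H h hh N
  have h1 : par Mh Nh := rightMul_preserves F H par hpar h hh M N Mh Nh hMh hNh hMN
  refine leftMul_preserves F H par hpar h⁻¹ (inv_ne_zero hh) Mh Nh M' N' ?_ ?_ h1
  · rw [hM', hMh, Set.image_image]
    simp [mul_assoc]
  · rw [hN', hNh, Set.image_image]
    simp [mul_assoc]

/-- Every inner automorphism `x ↦ h⁻¹·x·h` of `H` preserves every Clifford-like
parallelism. -/
theorem innerAut_preserves
    (hcenter : CenterEqF F H) (hdim : Module.finrank F H = 4)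
    (par : Line F H → Line F H → Prop) (hpar : IsCliffordLike F H par)
    (h : H) (hh : h ≠ 0) :
    Preserves F H (fun x => h⁻¹ * x * h) par := by
  intro M N M' N' hM' hN'
  constructor
  · exact innerAut_forward F H par hpar h hh M N M' N' hM' hN'
  · refine innerAut_forward F H par hpar h⁻¹ (inv_ne_zero hh) M' N' M N ?_ ?_
    · rw [hM', Set.image_image]
      have key : ∀ x : H, h * (h⁻¹ * x * h) * h⁻¹ = x := by
        intro x
        rw [mul_assoc, mul_inv_cancel_right₀ hh, mul_inv_cancel_left₀ hh]
      simp [key]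
    · rw [hN', Set.image_image]
      have key : ∀ x : H, h * (h⁻¹ * x * h) * h⁻¹ = x := by
        intro x
        rw [mul_assoc, mul_inv_cancel_right₀ hh, mul_inv_cancel_left₀ hh]
      simp [key]
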